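/- Suppose the 0-1 matrix w (with r rows and m columns) satisfies the SSSI constraint (every column of w contains at most one nonzero entry), and the polytope P(w) is nonempty. Then for every cost vector c : Fin m → ℚ with c_j ≥ 0 for all j, there exists (y*, t*) ∈ P(w) all of whose coordinates lie in {0,1} such that Σ_j c_j t*_j ≤ Σ_j c_j t_j for every (y, t) ∈ P(w). (That is, the LP relaxation P₁^LP always has an integral optimal solution.) -/

import Mathlib

open Finset in
/-- The feasible region `P(w)` of the LP relaxation `P₁^LP`: pairs `(y, t)` satisfying
(C1) `∑_{e : ℓ e = v} y_e = 1` for all left vertices `v`,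
(C2) `∑_{e : ρ e = u} y_e ≤ 1` for all right vertices `u`,
(C3) `∑_j w_{i j} t_j ≥ 1` for all source-SCCs `i`,
(C3') `t_j ≥ ∑_{e : ρ e = inr j} y_e` for all inputs `j`,
and the box constraints `0 ≤ y ≤ 1`, `0 ≤ t ≤ 1`. -/
def Pw {n m r : ℕ} {V E : Type*} [Fintype E] [DecidableEq V]
    (ℓ : E → Fin n) (ρ : E → V ⊕ Fin m) (w : Matrix (Fin r) (Fin m) ℝ) :
    Set ((E → ℝ) × (Fin m → ℝ)) :=
  { yt | (∀ v : Fin n, ∑ e : E, (if ℓ e = v then yt.1 e else 0) = 1) ∧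
         (∀ u : V ⊕ Fin m, ∑ e : E, (if ρ e = u then yt.1 e else 0) ≤ 1) ∧
         (∀ i : Fin r, 1 ≤ ∑ j : Fin m, w i j * yt.2 j) ∧
         (∀ j : Fin m, (∑ e : E, (if ρ e = Sum.inr j then yt.1 e else 0)) ≤ yt.2 j) ∧
         (∀ e : E, 0 ≤ yt.1 e ∧ yt.1 e ≤ 1) ∧
         (∀ j : Fin m, 0 ≤ yt.2 j ∧ yt.2 j ≤ 1) }

/-- The feasible region `P_k(w)` of the cardinality-constrained LP relaxation `P₂^LP`:
`P(w)` intersected with `{(y, t) : ∑_j t_j ≤ k}`. -/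
def Pk {n m r : ℕ} {V E : Type*} [Fintype E] [DecidableEq V]
    (ℓ : E → Fin n) (ρ : E → V ⊕ Fin m) (w : Matrix (Fin r) (Fin m) ℝ) (k : ℕ) :
    Set ((E → ℝ) × (Fin m → ℝ)) :=
  Pw ℓ ρ w ∩ { yt | ∑ j : Fin m, yt.2 j ≤ (k : ℝ) }

section AuxiliaryLemmas

open Finset

theorem exists_nonzero_balanced {𝓔 P Q : Type*} [Fintype 𝓔] [Fintype P] [Fintype Q]
    [DecidableEq P] [DecidableEq Q]
    (pend : 𝓔 → P) (qend : 𝓔 → Q) (TP : Finset P) (TQ : Finset Q)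
    (hP : ∀ p ∈ TP, (univ.filter fun e => pend e = p).card ≠ 1)
    (hQ : ∀ q ∈ TQ, (univ.filter fun e => qend e = q).card ≠ 1)
    (hE : Nonempty 𝓔) :
    ∃ dz : 𝓔 → ℝ, dz ≠ 0 ∧
      (∀ p ∈ TP, ∑ e, (if pend e = p then dz e else 0) = 0) ∧
      (∀ q ∈ TQ, ∑ e, (if qend e = q then dz e else 0) = 0) := by
  classical
  by_contra hcon
  push_neg at hcon
  have hsol : ∀ dz : 𝓔 → ℝ,
      (∀ p ∈ TP, ∑ e, (if pend e = p then dz e else 0) = 0) →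
      (∀ q ∈ TQ, ∑ e, (if qend e = q then dz e else 0) = 0) → dz = 0 := by
    intro dz h1 h2
    by_contra hdz
    obtain ⟨q, hq, hne⟩ := hcon dz hdz h1
    exact hne (h2 q hq)
  -- the cardinality bound coming from injectivity of the constraint map
  have key : ∀ (SP : Finset P) (SQ : Finset Q),
      (∀ dz : 𝓔 → ℝ,
        (∀ p ∈ SP, ∑ e, (if pend e = p then dz e else 0) = 0) →
        (∀ q ∈ SQ, ∑ e, (if qend e = q then dz e else 0) = 0) → dz = 0) →
      Fintype.card 𝓔 ≤ SP.card + SQ.card := by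
    intro SP SQ hker
    let M : (𝓔 → ℝ) →ₗ[ℝ] ((↥SP ⊕ ↥SQ) → ℝ) :=
      LinearMap.pi (Sum.elim
        (fun p => ∑ e ∈ univ.filter (fun e => pend e = (p : P)), LinearMap.proj e)
        (fun q => ∑ e ∈ univ.filter (fun e => qend e = (q : Q)), LinearMap.proj e))
    have hMinj : Function.Injective M := by
      rw [← LinearMap.ker_eq_bot, LinearMap.ker_eq_bot']
      intro dz hdz
      apply hker dz
      · intro p hp
        have h := congrFun hdz (Sum.inl ⟨p, hp⟩)
        simp only [M, LinearMap.pi_apply, Sum.elim_inl, LinearMap.coe_sum,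
          Finset.sum_apply, LinearMap.proj_apply, Pi.zero_apply] at h
        rw [← Finset.sum_filter]
        exact h
      · intro q hq
        have h := congrFun hdz (Sum.inr ⟨q, hq⟩)
        simp only [M, LinearMap.pi_apply, Sum.elim_inr, LinearMap.coe_sum,
          Finset.sum_apply, LinearMap.proj_apply, Pi.zero_apply] at h
        rw [← Finset.sum_filter]
        exact h
    have hle := LinearMap.finrank_le_finrank_of_injective hMinj
    simpa [Module.finrank_fintype_fun_eq_card, Fintype.card_sum] using hle
  set dP : P → ℕ := fun p => (univ.filter fun e => pend e = p).card with hdP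
  set dQ : Q → ℕ := fun q => (univ.filter fun e => qend e = q).card with hdQ
  set TP' : Finset P := TP.filter (fun p => 0 < dP p) with hTP'
  set TQ' : Finset Q := TQ.filter (fun q => 0 < dQ q) with hTQ'
  have hdegP : Fintype.card 𝓔 = ∑ p, dP p := by
    rw [← Finset.card_univ]
    exact Finset.card_eq_sum_card_fiberwise (fun e _ => mem_univ (pend e))
  have hdegQ : Fintype.card 𝓔 = ∑ q, dQ q := by
    rw [← Finset.card_univ]
    exact Finset.card_eq_sum_card_fiberwise (fun e _ => mem_univ (qend e))
  have hTP2 : ∀ p ∈ TP', 2 ≤ dP p := by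
    intro p hp
    rw [hTP', mem_filter] at hp
    have h1 := hP p hp.1
    have h2 := hp.2
    simp only [hdP] at h2 ⊢
    omega
  have hTQ2 : ∀ q ∈ TQ', 2 ≤ dQ q := by
    intro q hq
    rw [hTQ', mem_filter] at hq
    have h1 := hQ q hq.1
    have h2 := hq.2
    simp only [hdQ] at h2 ⊢
    omega
  have h2P : 2 * TP'.card ≤ Fintype.card 𝓔 := by
    calc 2 * TP'.card = ∑ _p ∈ TP', 2 := by rw [Finset.sum_const, smul_eq_mul, mul_comm]
    _ ≤ ∑ p ∈ TP', dP p := Finset.sum_le_sum hTP2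
    _ ≤ ∑ p, dP p := Finset.sum_le_sum_of_subset (subset_univ _)
    _ = Fintype.card 𝓔 := hdegP.symm
  have h2Q : 2 * TQ'.card ≤ Fintype.card 𝓔 := by
    calc 2 * TQ'.card = ∑ _q ∈ TQ', 2 := by rw [Finset.sum_const, smul_eq_mul, mul_comm]
    _ ≤ ∑ q ∈ TQ', dQ q := Finset.sum_le_sum hTQ2
    _ ≤ ∑ q, dQ q := Finset.sum_le_sum_of_subset (subset_univ _)
    _ = Fintype.card 𝓔 := hdegQ.symm
  have hext_P : ∀ (dz : 𝓔 → ℝ), (∀ p ∈ TP', ∑ e, (if pend e = p then dz e else 0) = 0) →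
      ∀ p ∈ TP, ∑ e, (if pend e = p then dz e else 0) = 0 := by
    intro dz h p hp
    by_cases h0 : 0 < dP p
    · exact h p (by rw [hTP', mem_filter]; exact ⟨hp, h0⟩)
    · apply Finset.sum_eq_zero
      intro e _
      have he : pend e ≠ p := by
        intro he
        apply h0
        rw [hdP]
        exact card_pos.mpr ⟨e, mem_filter.mpr ⟨mem_univ e, he⟩⟩
      simp [he]
  have hext_Q : ∀ (dz : 𝓔 → ℝ), (∀ q ∈ TQ', ∑ e, (if qend e = q then dz e else 0) = 0) →
      ∀ q ∈ TQ, ∑ e, (if qend e = q then dz e else 0) = 0 := by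
    intro dz h q hq
    by_cases h0 : 0 < dQ q
    · exact h q (by rw [hTQ', mem_filter]; exact ⟨hq, h0⟩)
    · apply Finset.sum_eq_zero
      intro e _
      have he : qend e ≠ q := by
        intro he
        apply h0
        rw [hdQ]
        exact card_pos.mpr ⟨e, mem_filter.mpr ⟨mem_univ e, he⟩⟩
      simp [he]
  have hEle : Fintype.card 𝓔 ≤ TP'.card + TQ'.card :=
    key TP' TQ' (fun dz h1 h2 => hsol dz (hext_P dz h1) (hext_Q dz h2))
  have hEpos : 0 < Fintype.card 𝓔 := Fintype.card_pos_iff.mpr hE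
  -- equalities
  have hEeq : Fintype.card 𝓔 = TP'.card + TQ'.card ∧ 2 * TP'.card = Fintype.card 𝓔 ∧
      2 * TQ'.card = Fintype.card 𝓔 := by omega
  -- every edge has tight endpoints
  have hsumP : ∑ p ∈ TP', dP p = Fintype.card 𝓔 := by
    have h1 : ∑ p ∈ TP', dP p ≤ ∑ p, dP p := Finset.sum_le_sum_of_subset (subset_univ _)
    have h2 : 2 * TP'.card ≤ ∑ p ∈ TP', dP p := by
      calc 2 * TP'.card = ∑ _p ∈ TP', 2 := by rw [Finset.sum_const, smul_eq_mul, mul_comm]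
      _ ≤ ∑ p ∈ TP', dP p := Finset.sum_le_sum hTP2
    omega
  have hPall : ∀ e : 𝓔, pend e ∈ TP' := by
    intro e
    by_contra hnp
    have hzero : ∑ p ∈ univ \ TP', dP p = 0 := by
      have := Finset.sum_sdiff (subset_univ TP') (f := dP)
      omega
    have hdeg0 : dP (pend e) = 0 := by
      rw [Finset.sum_eq_zero_iff] at hzero
      exact hzero (pend e) (Finset.mem_sdiff.mpr ⟨mem_univ _, hnp⟩)
    rw [hdP] at hdeg0
    have : e ∈ univ.filter fun e' => pend e' = pend e := mem_filter.mpr ⟨mem_univ e, rfl⟩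
    simp only [Finset.card_eq_zero] at hdeg0
    rw [hdeg0] at this
    exact absurd this (Finset.notMem_empty e)
  have hsumQ : ∑ q ∈ TQ', dQ q = Fintype.card 𝓔 := by
    have h1 : ∑ q ∈ TQ', dQ q ≤ ∑ q, dQ q := Finset.sum_le_sum_of_subset (subset_univ _)
    have h2 : 2 * TQ'.card ≤ ∑ q ∈ TQ', dQ q := by
      calc 2 * TQ'.card = ∑ _q ∈ TQ', 2 := by rw [Finset.sum_const, smul_eq_mul, mul_comm]
      _ ≤ ∑ q ∈ TQ', dQ q := Finset.sum_le_sum hTQ2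
    omega
  have hQall : ∀ e : 𝓔, qend e ∈ TQ' := by
    intro e
    by_contra hnp
    have hzero : ∑ q ∈ univ \ TQ', dQ q = 0 := by
      have := Finset.sum_sdiff (subset_univ TQ') (f := dQ)
      omega
    have hdeg0 : dQ (qend e) = 0 := by
      rw [Finset.sum_eq_zero_iff] at hzero
      exact hzero (qend e) (Finset.mem_sdiff.mpr ⟨mem_univ _, hnp⟩)
    rw [hdQ] at hdeg0
    have : e ∈ univ.filter fun e' => qend e' = qend e := mem_filter.mpr ⟨mem_univ e, rfl⟩
    simp only [Finset.card_eq_zero] at hdeg0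
    rw [hdeg0] at this
    exact absurd this (Finset.notMem_empty e)
  -- one constraint is redundant
  obtain ⟨e₀⟩ := hE
  set q₀ : Q := qend e₀ with hq₀
  have hq₀mem : q₀ ∈ TQ' := hQall e₀
  have hker' : ∀ dz : 𝓔 → ℝ,
      (∀ p ∈ TP', ∑ e, (if pend e = p then dz e else 0) = 0) →
      (∀ q ∈ TQ'.erase q₀, ∑ e, (if qend e = q then dz e else 0) = 0) → dz = 0 := by
    intro dz h1 h2
    apply hsol dz (hext_P dz h1)
    apply hext_Q dz
    intro q hq
    by_cases hqq : q = q₀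
    · subst hqq
      have idP : ∑ p ∈ TP', ∑ e, (if pend e = p then dz e else 0) = ∑ e, dz e := by
        have h := Finset.sum_fiberwise_of_maps_to (s := univ) (fun e _ => hPall e) dz
        calc ∑ p ∈ TP', ∑ e, (if pend e = p then dz e else 0)
            = ∑ p ∈ TP', ∑ e ∈ univ.filter (fun e => pend e = p), dz e := by
              apply Finset.sum_congr rfl; intro p _; rw [Finset.sum_filter]
        _ = ∑ e, dz e := h
      have idQ : ∑ q ∈ TQ', ∑ e, (if qend e = q then dz e else 0) = ∑ e, dz e := by
        have h := Finset.sum_fiberwise_of_maps_to (s := univ) (fun e _ => hQall e) dz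
        calc ∑ q ∈ TQ', ∑ e, (if qend e = q then dz e else 0)
            = ∑ q ∈ TQ', ∑ e ∈ univ.filter (fun e => qend e = q), dz e := by
              apply Finset.sum_congr rfl; intro q _; rw [Finset.sum_filter]
        _ = ∑ e, dz e := h
      have hz1 : ∑ p ∈ TP', ∑ e, (if pend e = p then dz e else 0) = 0 :=
        Finset.sum_eq_zero h1
      have hz2 : ∑ q ∈ TQ'.erase q₀, ∑ e, (if qend e = q then dz e else 0) = 0 :=
        Finset.sum_eq_zero h2
      have := Finset.add_sum_erase TQ' (fun q => ∑ e, (if qend e = q then dz e else 0)) hq₀mem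
      -- this : balance q₀ + ∑ erase = ∑ TQ'
      rw [hz2, add_zero] at this
      have this' : (∑ e, if qend e = q₀ then dz e else 0) =
          ∑ q ∈ TQ', ∑ e, (if qend e = q then dz e else 0) := this
      rw [this', idQ, ← idP]
      exact hz1
    · exact h2 q (Finset.mem_erase.mpr ⟨hqq, hq⟩)
  have hfinal := key TP' (TQ'.erase q₀) hker'
  rw [Finset.card_erase_of_mem hq₀mem] at hfinal
  have hq₀pos : 0 < TQ'.card := Finset.card_pos.mpr ⟨q₀, hq₀mem⟩
  omega

lemma aux_nat_sum {E : Type*} (s : Finset E) (g : E → ℝ)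
    (h : ∀ a ∈ s, g a = 0 ∨ g a = 1) : ∃ k : ℕ, ∑ a ∈ s, g a = k := by
  classical
  induction s using Finset.induction_on with
  | empty => exact ⟨0, by simp⟩
  | insert a s' hnot ih =>
    obtain ⟨k, hk⟩ := ih (fun b hb => h b (mem_insert_of_mem hb))
    rcases h a (mem_insert_self a s') with h0 | h1
    · exact ⟨k, by rw [Finset.sum_insert hnot, h0, hk, zero_add]⟩
    · exact ⟨k + 1, by rw [Finset.sum_insert hnot, h1, hk]; push_cast; ring⟩

lemma aux_frac_plus_nat {a : ℝ} {k : ℕ} (h0 : 0 < a) (h1 : a < 1) (h : a + k = 1) :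
    False := by
  rcases Nat.eq_zero_or_pos k with hk | hk
  · subst hk; simp at h; linarith
  · have : (1 : ℝ) ≤ k := by exact_mod_cast hk
    linarith

lemma aux_frac_plus_nat_zero {a : ℝ} {k : ℕ} (h0 : 0 < a) (h : a + k = 0) : False := by
  have : (0 : ℝ) ≤ k := Nat.cast_nonneg k
  linarith

lemma aux_frac_eq_nat {a : ℝ} {k : ℕ} (h0 : 0 < a) (h1 : a < 1) (h : a = k) : False := by
  rcases Nat.eq_zero_or_pos k with hk | hk
  · subst hk; simp at h; linarith
  · have : (1 : ℝ) ≤ k := by exact_mod_cast hk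
    linarith

lemma aux_sum_split {E : Type*} (s : Finset E) (g : E → ℝ) (e₀ : E) (he₀ : e₀ ∈ s)
    (hint : ∀ e ∈ s, e ≠ e₀ → g e = 0 ∨ g e = 1) :
    ∃ k : ℕ, ∑ e ∈ s, g e = g e₀ + k := by
  classical
  obtain ⟨k, hk⟩ := aux_nat_sum (s.erase e₀) g
    (fun b hb => hint b (Finset.mem_of_mem_erase hb) (Finset.ne_of_mem_erase hb))
  exact ⟨k, by rw [← Finset.add_sum_erase s g he₀, hk]⟩

/-- Perturbation lemma: a direction that preserves all tight constraints and is supported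
on fractional coordinates can be added and subtracted while staying in `Pw`. -/
lemma perturb_mem {n m r : ℕ} {V E : Type*} [Fintype V] [Fintype E] [DecidableEq V]
    (ℓ : E → Fin n) (ρ : E → V ⊕ Fin m) (w : Matrix (Fin r) (Fin m) ℝ)
    (hw01 : ∀ i j, w i j = 0 ∨ w i j = 1)
    (x : (E → ℝ) × (Fin m → ℝ)) (hx : x ∈ Pw ℓ ρ w)
    (d : (E → ℝ) × (Fin m → ℝ))
    (ha : ∀ v, ∑ e, (if ℓ e = v then d.1 e else 0) = 0)
    (hb : ∀ u, (∑ e, (if ρ e = u then x.1 e else 0)) = 1 →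
      ∑ e, (if ρ e = u then d.1 e else 0) = 0)
    (hc3 : ∀ i, (∑ j, w i j * x.2 j) = 1 → ∑ j, w i j * d.2 j = 0)
    (hd : ∀ j, x.2 j = (∑ e, (if ρ e = Sum.inr j then x.1 e else 0)) →
      d.2 j = ∑ e, (if ρ e = Sum.inr j then d.1 e else 0))
    (he : ∀ e, d.1 e ≠ 0 → 0 < x.1 e ∧ x.1 e < 1)
    (hf : ∀ j, d.2 j ≠ 0 → 0 < x.2 j ∧ x.2 j < 1) :
    ∃ ε : ℝ, 0 < ε ∧ x + ε • d ∈ Pw ℓ ρ w ∧ x - ε • d ∈ Pw ℓ ρ w := by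
  classical
  obtain ⟨hC1, hC2, hC3, hC3', hbox, hboxt⟩ := hx
  set M : ℝ := (∑ e, |d.1 e|) + (∑ j, |d.2 j|) + 1 with hM
  have hdy_nonneg : (0:ℝ) ≤ ∑ e, |d.1 e| := Finset.sum_nonneg (fun e _ => abs_nonneg _)
  have hdt_nonneg : (0:ℝ) ≤ ∑ j, |d.2 j| := Finset.sum_nonneg (fun j _ => abs_nonneg _)
  have hMpos : 0 < M := by rw [hM]; linarith
  -- M bounds
  have hMb1 : ∀ u : V ⊕ Fin m, |∑ e, (if ρ e = u then d.1 e else 0)| ≤ M := by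
    intro u
    calc |∑ e, (if ρ e = u then d.1 e else 0)| ≤ ∑ e, |if ρ e = u then d.1 e else 0| :=
          Finset.abs_sum_le_sum_abs _ _
    _ ≤ ∑ e, |d.1 e| := by
          apply Finset.sum_le_sum
          intro e _
          by_cases h : ρ e = u <;> simp [h, abs_nonneg]
    _ ≤ M := by rw [hM]; linarith
  have hMb3 : ∀ i, |∑ j, w i j * d.2 j| ≤ M := by
    intro i
    calc |∑ j, w i j * d.2 j| ≤ ∑ j, |w i j * d.2 j| := Finset.abs_sum_le_sum_abs _ _
    _ ≤ ∑ j, |d.2 j| := by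
          apply Finset.sum_le_sum
          intro j _
          rcases hw01 i j with h | h <;> simp [h, abs_nonneg, abs_mul]
    _ ≤ M := by rw [hM]; linarith
  have hMb5 : ∀ e, |d.1 e| ≤ M := by
    intro e
    have := Finset.single_le_sum (f := fun e => |d.1 e|) (fun e _ => abs_nonneg _) (mem_univ e)
    rw [hM]; linarith
  have hMb6 : ∀ j, |d.2 j| ≤ M := by
    intro j
    have := Finset.single_le_sum (f := fun j => |d.2 j|) (fun j _ => abs_nonneg _) (mem_univ j)
    rw [hM]; linarith
  have hMb4 : ∀ j, |d.2 j - ∑ e, (if ρ e = Sum.inr j then d.1 e else 0)| ≤ M := by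
    intro j
    have h1 := hMb1 (Sum.inr j)
    have h2 : |d.2 j| ≤ ∑ j', |d.2 j'| :=
      Finset.single_le_sum (f := fun j => |d.2 j|) (fun j _ => abs_nonneg _) (mem_univ j)
    have h3 : |∑ e, (if ρ e = Sum.inr j then d.1 e else 0)| ≤ ∑ e, |d.1 e| := by
      calc |∑ e, (if ρ e = Sum.inr j then d.1 e else 0)|
          ≤ ∑ e, |if ρ e = Sum.inr j then d.1 e else 0| := Finset.abs_sum_le_sum_abs _ _
      _ ≤ ∑ e, |d.1 e| := by
            apply Finset.sum_le_sum; intro e _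
            by_cases h : ρ e = Sum.inr j <;> simp [h, abs_nonneg]
    calc |d.2 j - ∑ e, (if ρ e = Sum.inr j then d.1 e else 0)|
        ≤ |d.2 j| + |∑ e, (if ρ e = Sum.inr j then d.1 e else 0)| := abs_sub _ _
    _ ≤ M := by rw [hM]; linarith
  -- gaps
  have gapY : ∃ δ1 : ℝ, 0 < δ1 ∧ ∀ e, d.1 e ≠ 0 → δ1 ≤ x.1 e ∧ δ1 ≤ 1 - x.1 e := by
    set g : E → ℝ := fun e => if d.1 e = 0 then 1 else min (x.1 e) (1 - x.1 e) with hg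
    refine ⟨(insert (1:ℝ) (univ.image g)).min' (Finset.insert_nonempty _ _), ?_, ?_⟩
    · rw [Finset.lt_min'_iff]
      intro b hb
      rcases Finset.mem_insert.mp hb with rfl | hb
      · norm_num
      · obtain ⟨e, -, rfl⟩ := Finset.mem_image.mp hb
        rw [hg]
        by_cases h : d.1 e = 0
        · simp [h]
        · obtain ⟨h1, h2⟩ := he e h
          simp only [h, if_false, lt_min_iff]
          constructor <;> [exact h1; linarith]
    · intro e hde
      have hle := Finset.min'_le (insert (1:ℝ) (univ.image g)) (g e)
        (Finset.mem_insert_of_mem (Finset.mem_image_of_mem g (mem_univ e)))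
      rw [hg] at hle
      simp only [hde, if_false, le_min_iff] at hle
      exact ⟨hle.1, hle.2⟩
  have gapT : ∃ δ2 : ℝ, 0 < δ2 ∧ ∀ j, d.2 j ≠ 0 → δ2 ≤ x.2 j ∧ δ2 ≤ 1 - x.2 j := by
    set g : Fin m → ℝ := fun j => if d.2 j = 0 then 1 else min (x.2 j) (1 - x.2 j) with hg
    refine ⟨(insert (1:ℝ) (univ.image g)).min' (Finset.insert_nonempty _ _), ?_, ?_⟩
    · rw [Finset.lt_min'_iff]
      intro b hb
      rcases Finset.mem_insert.mp hb with rfl | hb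
      · norm_num
      · obtain ⟨j, -, rfl⟩ := Finset.mem_image.mp hb
        rw [hg]
        by_cases h : d.2 j = 0
        · simp [h]
        · obtain ⟨h1, h2⟩ := hf j h
          simp only [h, if_false, lt_min_iff]
          constructor <;> [exact h1; linarith]
    · intro j hdj
      have hle := Finset.min'_le (insert (1:ℝ) (univ.image g)) (g j)
        (Finset.mem_insert_of_mem (Finset.mem_image_of_mem g (mem_univ j)))
      rw [hg] at hle
      simp only [hdj, if_false, le_min_iff] at hle
      exact ⟨hle.1, hle.2⟩
  have gapB : ∃ δ3 : ℝ, 0 < δ3 ∧ ∀ u : V ⊕ Fin m,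
      (∑ e, (if ρ e = u then x.1 e else 0)) ≠ 1 →
      δ3 ≤ 1 - ∑ e, (if ρ e = u then x.1 e else 0) := by
    set g : V ⊕ Fin m → ℝ := fun u => if (∑ e, (if ρ e = u then x.1 e else 0)) = 1 then 1
      else 1 - ∑ e, (if ρ e = u then x.1 e else 0) with hg
    refine ⟨(insert (1:ℝ) (univ.image g)).min' (Finset.insert_nonempty _ _), ?_, ?_⟩
    · rw [Finset.lt_min'_iff]
      intro b hb
      rcases Finset.mem_insert.mp hb with rfl | hb
      · norm_num
      · obtain ⟨u, -, rfl⟩ := Finset.mem_image.mp hb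
        rw [hg]
        by_cases h : (∑ e, (if ρ e = u then x.1 e else 0)) = 1
        · simp [h]
        · have := hC2 u
          simp only [h, if_false]
          cases lt_or_eq_of_le this with
          | inl hlt => linarith
          | inr heq => exact absurd heq h
    · intro u hu
      have hle := Finset.min'_le (insert (1:ℝ) (univ.image g)) (g u)
        (Finset.mem_insert_of_mem (Finset.mem_image_of_mem g (mem_univ u)))
      rw [hg] at hle
      simpa [hu] using hle
  have gapR : ∃ δ4 : ℝ, 0 < δ4 ∧ ∀ i, (∑ j, w i j * x.2 j) ≠ 1 →
      δ4 ≤ (∑ j, w i j * x.2 j) - 1 := by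
    set g : Fin r → ℝ := fun i => if (∑ j, w i j * x.2 j) = 1 then 1
      else (∑ j, w i j * x.2 j) - 1 with hg
    refine ⟨(insert (1:ℝ) (univ.image g)).min' (Finset.insert_nonempty _ _), ?_, ?_⟩
    · rw [Finset.lt_min'_iff]
      intro b hb
      rcases Finset.mem_insert.mp hb with rfl | hb
      · norm_num
      · obtain ⟨i, -, rfl⟩ := Finset.mem_image.mp hb
        rw [hg]
        by_cases h : (∑ j, w i j * x.2 j) = 1
        · simp [h]
        · have := hC3 i
          simp only [h, if_false]
          cases lt_or_eq_of_le this with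
          | inl hlt => linarith
          | inr heq => exact absurd heq.symm h
    · intro i hi
      have hle := Finset.min'_le (insert (1:ℝ) (univ.image g)) (g i)
        (Finset.mem_insert_of_mem (Finset.mem_image_of_mem g (mem_univ i)))
      rw [hg] at hle
      simpa [hi] using hle
  have gapS : ∃ δ5 : ℝ, 0 < δ5 ∧ ∀ j, x.2 j ≠ (∑ e, (if ρ e = Sum.inr j then x.1 e else 0)) →
      δ5 ≤ x.2 j - ∑ e, (if ρ e = Sum.inr j then x.1 e else 0) := by
    set g : Fin m → ℝ := fun j => if x.2 j = (∑ e, (if ρ e = Sum.inr j then x.1 e else 0)) then 1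
      else x.2 j - ∑ e, (if ρ e = Sum.inr j then x.1 e else 0) with hg
    refine ⟨(insert (1:ℝ) (univ.image g)).min' (Finset.insert_nonempty _ _), ?_, ?_⟩
    · rw [Finset.lt_min'_iff]
      intro b hb
      rcases Finset.mem_insert.mp hb with rfl | hb
      · norm_num
      · obtain ⟨j, -, rfl⟩ := Finset.mem_image.mp hb
        rw [hg]
        by_cases h : x.2 j = (∑ e, (if ρ e = Sum.inr j then x.1 e else 0))
        · simp [h]
        · have := hC3' j
          simp only [h, if_false]
          cases lt_or_eq_of_le this with
          | inl hlt => linarith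
          | inr heq => exact absurd heq.symm h
    · intro j hj
      have hle := Finset.min'_le (insert (1:ℝ) (univ.image g)) (g j)
        (Finset.mem_insert_of_mem (Finset.mem_image_of_mem g (mem_univ j)))
      rw [hg] at hle
      simpa [hj] using hle
  obtain ⟨δ1, hδ1, hgapY⟩ := gapY
  obtain ⟨δ2, hδ2, hgapT⟩ := gapT
  obtain ⟨δ3, hδ3, hgapB⟩ := gapB
  obtain ⟨δ4, hδ4, hgapR⟩ := gapR
  obtain ⟨δ5, hδ5, hgapS⟩ := gapS
  set δ : ℝ := min δ1 (min δ2 (min δ3 (min δ4 δ5))) with hδ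
  have hδpos : 0 < δ := by
    rw [hδ]
    exact lt_min hδ1 (lt_min hδ2 (lt_min hδ3 (lt_min hδ4 hδ5)))
  have hδle1 : δ ≤ δ1 := min_le_left _ _
  have hδle2 : δ ≤ δ2 := le_trans (min_le_right _ _) (min_le_left _ _)
  have hδle3 : δ ≤ δ3 := le_trans (min_le_right _ _) (le_trans (min_le_right _ _) (min_le_left _ _))
  have hδle4 : δ ≤ δ4 := le_trans (min_le_right _ _)
    (le_trans (min_le_right _ _) (le_trans (min_le_right _ _) (min_le_left _ _)))
  have hδle5 : δ ≤ δ5 := le_trans (min_le_right _ _)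
    (le_trans (min_le_right _ _) (le_trans (min_le_right _ _) (min_le_right _ _)))
  set ε : ℝ := δ / M with hε
  have hεpos : 0 < ε := div_pos hδpos hMpos
  have hεM : ε * M = δ := div_mul_cancel₀ δ (ne_of_gt hMpos)
  have hsmall : ∀ (s B : ℝ), |s| ≤ ε → |B| ≤ M → |s * B| ≤ δ := by
    intro s B hs hB
    rw [abs_mul]
    calc |s| * |B| ≤ ε * M :=
      mul_le_mul hs hB (abs_nonneg B) (le_of_lt hεpos)
    _ = δ := hεM
  -- main membership claim
  have main : ∀ s : ℝ, |s| ≤ ε → x + s • d ∈ Pw ℓ ρ w := by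
    intro s hs
    have hcoord1 : ∀ e, (x + s • d).1 e = x.1 e + s * d.1 e := by
      intro e; simp [Prod.fst_add, Prod.smul_fst, Pi.add_apply, Pi.smul_apply, smul_eq_mul]
    have hcoord2 : ∀ j, (x + s • d).2 j = x.2 j + s * d.2 j := by
      intro j; simp [Prod.snd_add, Prod.smul_snd, Pi.add_apply, Pi.smul_apply, smul_eq_mul]
    have split1 : ∀ (u : V ⊕ Fin m),
        ∑ e, (if ρ e = u then (x.1 e + s * d.1 e) else 0)
          = (∑ e, (if ρ e = u then x.1 e else 0)) + s * ∑ e, (if ρ e = u then d.1 e else 0) := by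
      intro u
      rw [Finset.mul_sum, ← Finset.sum_add_distrib]
      apply Finset.sum_congr rfl
      intro e _
      by_cases h : ρ e = u <;> simp [h]
    have split0 : ∀ (v : Fin n),
        ∑ e, (if ℓ e = v then (x.1 e + s * d.1 e) else 0)
          = (∑ e, (if ℓ e = v then x.1 e else 0)) + s * ∑ e, (if ℓ e = v then d.1 e else 0) := by
      intro v
      rw [Finset.mul_sum, ← Finset.sum_add_distrib]
      apply Finset.sum_congr rfl
      intro e _
      by_cases h : ℓ e = v <;> simp [h]
    have split3 : ∀ i, ∑ j, w i j * (x.2 j + s * d.2 j)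
        = (∑ j, w i j * x.2 j) + s * ∑ j, w i j * d.2 j := by
      intro i
      rw [Finset.mul_sum, ← Finset.sum_add_distrib]
      apply Finset.sum_congr rfl
      intro j _
      ring
    have habs := abs_le.mp hs
    refine ⟨?_, ?_, ?_, ?_, ?_, ?_⟩
    · intro v
      calc ∑ e, (if ℓ e = v then (x + s • d).1 e else 0)
          = ∑ e, (if ℓ e = v then (x.1 e + s * d.1 e) else 0) := by
            apply Finset.sum_congr rfl; intro e _; rw [hcoord1]
      _ = 1 := by rw [split0, hC1 v, ha v, mul_zero, add_zero]
    · intro u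
      have heq : ∑ e, (if ρ e = u then (x + s • d).1 e else 0)
          = (∑ e, (if ρ e = u then x.1 e else 0)) + s * ∑ e, (if ρ e = u then d.1 e else 0) := by
        rw [← split1]
        apply Finset.sum_congr rfl; intro e _; rw [hcoord1]
      rw [heq]
      by_cases htight : (∑ e, (if ρ e = u then x.1 e else 0)) = 1
      · rw [htight, hb u htight, mul_zero, add_zero]
      · have hg := hgapB u htight
        have hbd := hsmall s _ hs (hMb1 u)
        have := abs_le.mp hbd
        linarith
    · intro i
      have heq : ∑ j, w i j * (x + s • d).2 j
          = (∑ j, w i j * x.2 j) + s * ∑ j, w i j * d.2 j := by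
        rw [← split3]
        apply Finset.sum_congr rfl; intro j _; rw [hcoord2]
      rw [heq]
      by_cases htight : (∑ j, w i j * x.2 j) = 1
      · rw [htight, hc3 i htight, mul_zero, add_zero]
      · have hg := hgapR i htight
        have hbd := hsmall s _ hs (hMb3 i)
        have := abs_le.mp hbd
        linarith
    · intro j
      have heq : ∑ e, (if ρ e = Sum.inr j then (x + s • d).1 e else 0)
          = (∑ e, (if ρ e = Sum.inr j then x.1 e else 0))
            + s * ∑ e, (if ρ e = Sum.inr j then d.1 e else 0) := by
        rw [← split1]
        apply Finset.sum_congr rfl; intro e _; rw [hcoord1]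
      rw [heq, hcoord2]
      by_cases htight : x.2 j = (∑ e, (if ρ e = Sum.inr j then x.1 e else 0))
      · rw [hd j htight, ← htight]
      · have hg := hgapS j htight
        have hbd := hsmall s _ hs (hMb4 j)
        have := abs_le.mp hbd
        have harith : s * (∑ e, (if ρ e = Sum.inr j then d.1 e else 0)) - s * d.2 j
            = -(s * (d.2 j - ∑ e, (if ρ e = Sum.inr j then d.1 e else 0))) := by ring
        nlinarith [this.1, this.2]
    · intro e
      rw [hcoord1]
      by_cases hde : d.1 e = 0
      · simp [hde, hbox e]
      · obtain ⟨hg1, hg2⟩ := hgapY e hde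
        have hbd := hsmall s _ hs (hMb5 e)
        have := abs_le.mp hbd
        constructor <;> linarith
    · intro j
      rw [hcoord2]
      by_cases hdj : d.2 j = 0
      · simp [hdj, hboxt j]
      · obtain ⟨hg1, hg2⟩ := hgapT j hdj
        have hbd := hsmall s _ hs (hMb6 j)
        have := abs_le.mp hbd
        constructor <;> linarith
  refine ⟨ε, hεpos, main ε (by rw [abs_of_pos hεpos]), ?_⟩
  have : x - ε • d = x + (-ε) • d := by
    rw [neg_smul, sub_eq_add_neg]
  rw [this]
  exact main (-ε) (by rw [abs_neg, abs_of_pos hεpos])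

lemma exists_good_direction {n m r : ℕ} {V E : Type*} [Fintype V] [Fintype E] [DecidableEq V]
    (ℓ : E → Fin n) (ρ : E → V ⊕ Fin m) (w : Matrix (Fin r) (Fin m) ℝ)
    (hw01 : ∀ i j, w i j = 0 ∨ w i j = 1)
    (hSSSI : ∀ j : Fin m, ∀ i i' : Fin r, w i j ≠ 0 → w i' j ≠ 0 → i = i')
    (x : (E → ℝ) × (Fin m → ℝ)) (hx : x ∈ Pw ℓ ρ w)
    (hfrac : (∃ e, 0 < x.1 e ∧ x.1 e < 1) ∨ (∃ j, 0 < x.2 j ∧ x.2 j < 1)) :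
    ∃ d : (E → ℝ) × (Fin m → ℝ),
      ((∃ e, d.1 e ≠ 0) ∨ (∃ j, d.2 j ≠ 0)) ∧
      (∀ v, ∑ e, (if ℓ e = v then d.1 e else 0) = 0) ∧
      (∀ u, (∑ e, (if ρ e = u then x.1 e else 0)) = 1 →
        ∑ e, (if ρ e = u then d.1 e else 0) = 0) ∧
      (∀ i, (∑ j, w i j * x.2 j) = 1 → ∑ j, w i j * d.2 j = 0) ∧
      (∀ j, x.2 j = (∑ e, (if ρ e = Sum.inr j then x.1 e else 0)) →
          d.2 j = ∑ e, (if ρ e = Sum.inr j then d.1 e else 0)) ∧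
      (∀ e, d.1 e ≠ 0 → 0 < x.1 e ∧ x.1 e < 1) ∧
      (∀ j, d.2 j ≠ 0 → 0 < x.2 j ∧ x.2 j < 1) := by
  classical
  obtain ⟨hC1, hC2, hC3, hC3', hbox, hboxt⟩ := hx
  -- the unique row of an input, if any
  have hrow_ex : ∀ (j : Fin m), ∃ o : Option (Fin r), ∀ i, o = some i ↔ w i j ≠ 0 := by
    intro j
    by_cases hex : ∃ i, w i j ≠ 0
    · refine ⟨some hex.choose, fun i => ?_⟩
      constructor
      · intro h
        have h' := Option.some.inj h
        exact h' ▸ hex.choose_spec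
      · intro hne
        exact congrArg some (hSSSI j hex.choose i hex.choose_spec hne)
    · refine ⟨none, fun i => ?_⟩
      constructor
      · intro h; exact absurd h (by simp)
      · intro hne; exact absurd ⟨i, hne⟩ hex
  choose rowOf hrowOf using hrow_ex
  -- fractionality predicates
  set FY : E → Prop := fun e => 0 < x.1 e ∧ x.1 e < 1 with hFY
  set FT : Fin m → Prop := fun j => 0 < x.2 j ∧ x.2 j < 1 with hFT
  -- integrality from non-fractionality
  have hintY : ∀ e, ¬ FY e → x.1 e = 0 ∨ x.1 e = 1 := by
    intro e hne
    simp only [hFY] at hne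
    push_neg at hne
    rcases (hbox e).1.eq_or_lt with h0 | h0
    · exact Or.inl h0.symm
    · exact Or.inr (le_antisymm (hbox e).2 (hne h0))
  have hintT : ∀ j, ¬ FT j → x.2 j = 0 ∨ x.2 j = 1 := by
    intro j hne
    simp only [hFT] at hne
    push_neg at hne
    rcases (hboxt j).1.eq_or_lt with h0 | h0
    · exact Or.inl h0.symm
    · exact Or.inr (le_antisymm (hboxt j).2 (hne h0))
  set pend : ({e // FY e} ⊕ {j // FT j}) → (Fin n ⊕ Option (Fin r)) :=
    Sum.elim (fun ee => Sum.inl (ℓ ee.1)) (fun jj => Sum.inr (rowOf jj.1)) with hpend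
  set qend : ({e // FY e} ⊕ {j // FT j}) → (V ⊕ Fin m) :=
    Sum.elim (fun ee => ρ ee.1) (fun jj => Sum.inr jj.1) with hqend
  set TP : Finset (Fin n ⊕ Option (Fin r)) :=
    (univ.image Sum.inl) ∪
      ((univ.filter (fun i => (∑ j, w i j * x.2 j) = 1)).image (fun i => Sum.inr (some i)))
    with hTP
  set TQ : Finset (V ⊕ Fin m) :=
    ((univ.filter (fun v' : V => (∑ e, (if ρ e = Sum.inl v' then x.1 e else 0)) = 1)).image
        Sum.inl) ∪
      ((univ.filter (fun j => x.2 j = ∑ e, (if ρ e = Sum.inr j then x.1 e else 0))).image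
        Sum.inr)
    with hTQ
  -- degree conditions
  have hP : ∀ p ∈ TP, (univ.filter fun ε => pend ε = p).card ≠ 1 := by
    intro p hp hcard
    rw [Finset.card_eq_one] at hcard
    obtain ⟨ε₀, hε₀⟩ := hcard
    have huniq : ∀ ε', pend ε' = p → ε' = ε₀ := by
      intro ε' h
      have hmem : ε' ∈ univ.filter (fun ε => pend ε = p) := mem_filter.mpr ⟨mem_univ _, h⟩
      rw [hε₀] at hmem
      exact Finset.mem_singleton.mp hmem
    have hε₀mem : pend ε₀ = p := by
      have hmem : ε₀ ∈ univ.filter (fun ε => pend ε = p) := by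
        rw [hε₀]; exact Finset.mem_singleton_self _
      exact (mem_filter.mp hmem).2
    rw [hTP, Finset.mem_union] at hp
    rcases hp with hl | hr
    · obtain ⟨v, -, rfl⟩ := Finset.mem_image.mp hl
      rcases ε₀ with ⟨e₀, hfr⟩ | ⟨j₀, hfr⟩
      · have hv : ℓ e₀ = v := by
          rw [hpend] at hε₀mem
          exact Sum.inl.inj hε₀mem
        have hothers : ∀ e ∈ univ.filter (fun e => ℓ e = v), e ≠ e₀ →
            x.1 e = 0 ∨ x.1 e = 1 := by
          intro e he hne
          apply hintY
          intro hf
          have h' := huniq (Sum.inl ⟨e, hf⟩)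
            (by rw [hpend]; exact congrArg Sum.inl (mem_filter.mp he).2)
          rw [Sum.inl.injEq, Subtype.mk.injEq] at h'
          exact hne h'
        obtain ⟨k, hk⟩ := aux_sum_split (univ.filter fun e => ℓ e = v) x.1 e₀
          (mem_filter.mpr ⟨mem_univ _, hv⟩) hothers
        rw [Finset.sum_filter, hC1 v] at hk
        rw [hFY] at hfr
        exact aux_frac_plus_nat hfr.1 hfr.2 hk.symm
      · rw [hpend] at hε₀mem
        exact absurd hε₀mem (by simp)
    · obtain ⟨i, hi, rfl⟩ := Finset.mem_image.mp hr
      have htight : (∑ j, w i j * x.2 j) = 1 := (mem_filter.mp hi).2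
      rcases ε₀ with ⟨e₀, hfr⟩ | ⟨j₀, hfr⟩
      · rw [hpend] at hε₀mem
        exact absurd hε₀mem (by simp)
      · have hrow : rowOf j₀ = some i := by
          rw [hpend] at hε₀mem
          exact Sum.inr.inj hε₀mem
        have hwi : w i j₀ = 1 := by
          have := (hrowOf j₀ i).mp hrow
          rcases hw01 i j₀ with h | h
          · exact absurd h this
          · exact h
        have hothers : ∀ j ∈ (univ : Finset (Fin m)), j ≠ j₀ →
            w i j * x.2 j = 0 ∨ w i j * x.2 j = 1 := by
          intro j _ hne
          rcases hw01 i j with h | h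
          · left; rw [h, zero_mul]
          · rw [h, one_mul]
            apply hintT
            intro hf
            have h' := huniq (Sum.inr ⟨j, hf⟩)
              (by rw [hpend]
                  exact congrArg Sum.inr ((hrowOf j i).mpr (by rw [h]; exact one_ne_zero)))
            rw [Sum.inr.injEq, Subtype.mk.injEq] at h'
            exact hne h'
        obtain ⟨k, hk⟩ := aux_sum_split univ (fun j => w i j * x.2 j) j₀ (mem_univ _) hothers
        rw [htight, hwi, one_mul] at hk
        rw [hFT] at hfr
        exact aux_frac_plus_nat hfr.1 hfr.2 hk.symm
  have hQ : ∀ q ∈ TQ, (univ.filter fun ε => qend ε = q).card ≠ 1 := by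
    intro q hq hcard
    rw [Finset.card_eq_one] at hcard
    obtain ⟨ε₀, hε₀⟩ := hcard
    have huniq : ∀ ε', qend ε' = q → ε' = ε₀ := by
      intro ε' h
      have hmem : ε' ∈ univ.filter (fun ε => qend ε = q) := mem_filter.mpr ⟨mem_univ _, h⟩
      rw [hε₀] at hmem
      exact Finset.mem_singleton.mp hmem
    have hε₀mem : qend ε₀ = q := by
      have hmem : ε₀ ∈ univ.filter (fun ε => qend ε = q) := by
        rw [hε₀]; exact Finset.mem_singleton_self _
      exact (mem_filter.mp hmem).2
    rw [hTQ, Finset.mem_union] at hq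
    rcases hq with hl | hr
    · obtain ⟨v', hv', rfl⟩ := Finset.mem_image.mp hl
      have htight : (∑ e, (if ρ e = Sum.inl v' then x.1 e else 0)) = 1 := (mem_filter.mp hv').2
      rcases ε₀ with ⟨e₀, hfr⟩ | ⟨j₀, hfr⟩
      · have hv : ρ e₀ = Sum.inl v' := by
          rw [hqend] at hε₀mem
          exact hε₀mem
        have hothers : ∀ e ∈ univ.filter (fun e => ρ e = Sum.inl v'), e ≠ e₀ →
            x.1 e = 0 ∨ x.1 e = 1 := by
          intro e he hne
          apply hintY
          intro hf
          have h' := huniq (Sum.inl ⟨e, hf⟩) (by rw [hqend]; exact (mem_filter.mp he).2)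
          rw [Sum.inl.injEq, Subtype.mk.injEq] at h'
          exact hne h'
        obtain ⟨k, hk⟩ := aux_sum_split (univ.filter fun e => ρ e = Sum.inl v') x.1 e₀
          (mem_filter.mpr ⟨mem_univ _, hv⟩) hothers
        rw [Finset.sum_filter, htight] at hk
        rw [hFY] at hfr
        exact aux_frac_plus_nat hfr.1 hfr.2 hk.symm
      · rw [hqend] at hε₀mem
        exact absurd hε₀mem (by simp)
    · obtain ⟨j, hj, rfl⟩ := Finset.mem_image.mp hr
      have htight : x.2 j = ∑ e, (if ρ e = Sum.inr j then x.1 e else 0) := (mem_filter.mp hj).2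
      rcases ε₀ with ⟨e₀, hfr⟩ | ⟨j₁, hfr⟩
      · have hv : ρ e₀ = Sum.inr j := by
          rw [hqend] at hε₀mem
          exact hε₀mem
        have hnotfrac : ¬ FT j := by
          intro hf
          have h' := huniq (Sum.inr ⟨j, hf⟩) (by simp [hqend])
          exact absurd h' (by simp)
        have hothers : ∀ e ∈ univ.filter (fun e => ρ e = Sum.inr j), e ≠ e₀ →
            x.1 e = 0 ∨ x.1 e = 1 := by
          intro e he hne
          apply hintY
          intro hf
          have h' := huniq (Sum.inl ⟨e, hf⟩) (by rw [hqend]; exact (mem_filter.mp he).2)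
          rw [Sum.inl.injEq, Subtype.mk.injEq] at h'
          exact hne h'
        obtain ⟨k, hk⟩ := aux_sum_split (univ.filter fun e => ρ e = Sum.inr j) x.1 e₀
          (mem_filter.mpr ⟨mem_univ _, hv⟩) hothers
        rw [Finset.sum_filter, ← htight] at hk
        rw [hFY] at hfr
        rcases hintT j hnotfrac with h0 | h1
        · rw [h0] at hk
          exact aux_frac_plus_nat_zero hfr.1 hk.symm
        · rw [h1] at hk
          exact aux_frac_plus_nat hfr.1 hfr.2 hk.symm
      · have hjj : j₁ = j := by
          rw [hqend] at hε₀mem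
          exact Sum.inr.inj hε₀mem
        subst hjj
        have hothers : ∀ e ∈ univ.filter (fun e => ρ e = Sum.inr j₁),
            x.1 e = 0 ∨ x.1 e = 1 := by
          intro e he
          apply hintY
          intro hf
          have h' := huniq (Sum.inl ⟨e, hf⟩) (by rw [hqend]; exact (mem_filter.mp he).2)
          exact absurd h' (by simp)
        obtain ⟨k, hk⟩ := aux_nat_sum (univ.filter fun e => ρ e = Sum.inr j₁) x.1 hothers
        rw [Finset.sum_filter, ← htight] at hk
        rw [hFT] at hfr
        exact aux_frac_eq_nat hfr.1 hfr.2 hk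
  have hE : Nonempty ({e // FY e} ⊕ {j // FT j}) := by
    rcases hfrac with ⟨e, h⟩ | ⟨j, h⟩
    · exact ⟨Sum.inl ⟨e, by rw [hFY]; exact h⟩⟩
    · exact ⟨Sum.inr ⟨j, by rw [hFT]; exact h⟩⟩
  obtain ⟨dz, hdz0, hbalP, hbalQ⟩ := exists_nonzero_balanced pend qend TP TQ hP hQ hE
  -- the direction
  set dy : E → ℝ := fun e => if h : FY e then dz (Sum.inl ⟨e, h⟩) else 0 with hdy
  set dt : Fin m → ℝ := fun j => if h : FT j then -dz (Sum.inr ⟨j, h⟩) else 0 with hdt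
  -- subtype sum helpers
  have hsubE : ∀ (g : E → ℝ), (∀ e, ¬ FY e → g e = 0) →
      (∑ e, g e) = ∑ ee : {e // FY e}, g ee.1 := by
    intro g hg
    rw [← Fintype.sum_subtype_add_sum_subtype FY g]
    have h0 : (∑ ee : {e // ¬ FY e}, g ee.1) = 0 :=
      Finset.sum_eq_zero (fun ee _ => hg ee.1 ee.2)
    rw [h0, add_zero]
  have hsubT : ∀ (g : Fin m → ℝ), (∀ j, ¬ FT j → g j = 0) →
      (∑ j, g j) = ∑ jj : {j // FT j}, g jj.1 := by
    intro g hg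
    rw [← Fintype.sum_subtype_add_sum_subtype FT g]
    have h0 : (∑ jj : {j // ¬ FT j}, g jj.1) = 0 :=
      Finset.sum_eq_zero (fun jj _ => hg jj.1 jj.2)
    rw [h0, add_zero]
  -- specialized balance equations
  have hbal_v : ∀ v : Fin n,
      (∑ ee : {e // FY e}, (if ℓ ee.1 = v then dz (Sum.inl ee) else 0)) = 0 := by
    intro v
    have hmem : (Sum.inl v : Fin n ⊕ Option (Fin r)) ∈ TP := by
      rw [hTP]
      exact Finset.mem_union_left _ (Finset.mem_image_of_mem _ (mem_univ v))
    have hb := hbalP _ hmem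
    rw [Fintype.sum_sum_type] at hb
    simp only [hpend, Sum.elim_inl, Sum.elim_inr, Sum.inl.injEq, reduceCtorEq,
      if_false, Finset.sum_const_zero, add_zero] at hb
    exact hb
  have hbal_i : ∀ i : Fin r, (∑ j, w i j * x.2 j) = 1 →
      (∑ jj : {j // FT j}, (if rowOf jj.1 = some i then dz (Sum.inr jj) else 0)) = 0 := by
    intro i htight
    have hmem : (Sum.inr (some i) : Fin n ⊕ Option (Fin r)) ∈ TP := by
      rw [hTP]
      exact Finset.mem_union_right _
        (Finset.mem_image_of_mem _ (mem_filter.mpr ⟨mem_univ _, htight⟩))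
    have hb := hbalP _ hmem
    rw [Fintype.sum_sum_type] at hb
    simp only [hpend, Sum.elim_inl, Sum.elim_inr, Sum.inr.injEq, reduceCtorEq,
      if_false, Finset.sum_const_zero, zero_add, Option.some.injEq] at hb
    exact hb
  have hbal_v' : ∀ v' : V, (∑ e, (if ρ e = Sum.inl v' then x.1 e else 0)) = 1 →
      (∑ ee : {e // FY e}, (if ρ ee.1 = Sum.inl v' then dz (Sum.inl ee) else 0)) = 0 := by
    intro v' htight
    have hmem : (Sum.inl v' : V ⊕ Fin m) ∈ TQ := by
      rw [hTQ]
      exact Finset.mem_union_left _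
        (Finset.mem_image_of_mem _ (mem_filter.mpr ⟨mem_univ _, htight⟩))
    have hb := hbalQ _ hmem
    rw [Fintype.sum_sum_type] at hb
    simp only [hqend, Sum.elim_inl, Sum.elim_inr, reduceCtorEq, if_false,
      Finset.sum_const_zero, add_zero] at hb
    exact hb
  have hbal_j : ∀ j : Fin m, x.2 j = (∑ e, (if ρ e = Sum.inr j then x.1 e else 0)) →
      (∑ ee : {e // FY e}, (if ρ ee.1 = Sum.inr j then dz (Sum.inl ee) else 0))
        + (∑ jj : {j' // FT j'}, (if jj.1 = j then dz (Sum.inr jj) else 0)) = 0 := by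
    intro j htight
    have hmem : (Sum.inr j : V ⊕ Fin m) ∈ TQ := by
      rw [hTQ]
      exact Finset.mem_union_right _
        (Finset.mem_image_of_mem _ (mem_filter.mpr ⟨mem_univ _, htight⟩))
    have hb := hbalQ _ hmem
    rw [Fintype.sum_sum_type] at hb
    simp only [hqend, Sum.elim_inl, Sum.elim_inr, Sum.inr.injEq] at hb
    exact hb
  refine ⟨(dy, dt), ?_, ?_, ?_, ?_, ?_, ?_, ?_⟩
  · -- nonzero
    obtain ⟨ε, hε⟩ := Function.ne_iff.mp hdz0
    rcases ε with ⟨e, h⟩ | ⟨j, h⟩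
    · left
      exact ⟨e, by rw [hdy]; simpa [dif_pos h] using hε⟩
    · right
      exact ⟨j, by rw [hdt]; simp only [dif_pos h]; simpa using hε⟩
  · -- (a) C1 balance
    intro v
    have hzero : ∀ e, ¬ FY e → (if ℓ e = v then dy e else 0) = 0 := by
      intro e hne
      rw [hdy]
      by_cases h : ℓ e = v <;> simp [h, dif_neg hne]
    rw [hsubE _ hzero]
    refine Eq.trans ?_ (hbal_v v)
    apply Finset.sum_congr rfl
    intro ee _
    by_cases h : ℓ ee.1 = v <;> simp [h, hdy, dif_pos ee.2]
  · -- (b) C2 balance at tight u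
    intro u htight
    rcases u with v' | j
    · have hzero : ∀ e, ¬ FY e → (if ρ e = Sum.inl v' then dy e else 0) = 0 := by
        intro e hne
        rw [hdy]
        by_cases h : ρ e = Sum.inl v' <;> simp [h, dif_neg hne]
      rw [hsubE _ hzero]
      refine Eq.trans ?_ (hbal_v' v' htight)
      apply Finset.sum_congr rfl
      intro ee _
      by_cases h : ρ ee.1 = Sum.inl v' <;> simp [h, hdy, dif_pos ee.2]
    · -- tight C2 at an input: the load is 1, so t j = 1 and C3' tight
      have ht1 : x.2 j = 1 := by
        have h1 := hC3' j
        have h2 := (hboxt j).2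
        rw [htight] at h1
        linarith
      have htight' : x.2 j = ∑ e, (if ρ e = Sum.inr j then x.1 e else 0) := by
        rw [ht1, htight]
      have hb := hbal_j j htight'
      have hnofrac : ¬ FT j := by
        rw [hFT]
        intro hf
        rw [ht1] at hf
        exact absurd hf.2 (lt_irrefl 1)
      have h2 : (∑ jj : {j' // FT j'}, (if jj.1 = j then dz (Sum.inr jj) else 0)) = 0 := by
        apply Finset.sum_eq_zero
        intro jj _
        have : jj.1 ≠ j := by
          intro hh
          exact hnofrac (hh ▸ jj.2)
        simp [this]
      rw [h2, add_zero] at hb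
      have hzero : ∀ e, ¬ FY e → (if ρ e = Sum.inr j then dy e else 0) = 0 := by
        intro e hne
        rw [hdy]
        by_cases h : ρ e = Sum.inr j <;> simp [h, dif_neg hne]
      rw [hsubE _ hzero]
      refine Eq.trans ?_ hb
      apply Finset.sum_congr rfl
      intro ee _
      by_cases h : ρ ee.1 = Sum.inr j <;> simp [h, hdy, dif_pos ee.2]
  · -- (c) C3 balance at tight row
    intro i htight
    have step1 : (∑ j, w i j * dt j) = ∑ j, (if rowOf j = some i then dt j else 0) := by
      apply Finset.sum_congr rfl
      intro j _
      rcases hw01 i j with h | h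
      · have hne : rowOf j ≠ some i := by
          intro hh
          exact ((hrowOf j i).mp hh) h
        simp [h, hne]
      · have heq : rowOf j = some i := (hrowOf j i).mpr (by rw [h]; exact one_ne_zero)
        simp [h, heq]
    have hzero : ∀ j, ¬ FT j → (if rowOf j = some i then dt j else 0) = 0 := by
      intro j hne
      rw [hdt]
      by_cases h : rowOf j = some i <;> simp [h, dif_neg hne]
    rw [step1, hsubT _ hzero]
    have step3 : (∑ jj : {j // FT j}, (if rowOf jj.1 = some i then dt jj.1 else 0))
        = -∑ jj : {j // FT j}, (if rowOf jj.1 = some i then dz (Sum.inr jj) else 0) := by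
      rw [← Finset.sum_neg_distrib]
      apply Finset.sum_congr rfl
      intro jj _
      by_cases h : rowOf jj.1 = some i <;> simp [h, hdt, dif_pos jj.2]
    rw [step3, hbal_i i htight, neg_zero]
  · -- (d) C3' tightness transfer
    intro j htight
    have hb := hbal_j j htight
    have hEpart : (∑ ee : {e // FY e}, (if ρ ee.1 = Sum.inr j then dz (Sum.inl ee) else 0))
        = ∑ e, (if ρ e = Sum.inr j then dy e else 0) := by
      have hzero : ∀ e, ¬ FY e → (if ρ e = Sum.inr j then dy e else 0) = 0 := by
        intro e hne
        rw [hdy]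
        by_cases h : ρ e = Sum.inr j <;> simp [h, dif_neg hne]
      rw [hsubE _ hzero]
      apply Finset.sum_congr rfl
      intro ee _
      by_cases h : ρ ee.1 = Sum.inr j <;> simp [h, hdy, dif_pos ee.2]
    by_cases hfj : FT j
    · have hTpart : (∑ jj : {j' // FT j'}, (if jj.1 = j then dz (Sum.inr jj) else 0))
          = dz (Sum.inr ⟨j, hfj⟩) := by
        have h1 : ∀ jj : {j' // FT j'}, jj ≠ ⟨j, hfj⟩ →
            (if jj.1 = j then dz (Sum.inr jj) else 0) = 0 := by
          intro jj hne
          have : jj.1 ≠ j := fun hh => hne (Subtype.ext hh)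
          simp [this]
        have h2 := Fintype.sum_eq_single (⟨j, hfj⟩ : {j' // FT j'}) h1
        simpa using h2
      rw [hTpart, hEpart] at hb
      have hdtj : dt j = -dz (Sum.inr ⟨j, hfj⟩) := by rw [hdt]; simp [dif_pos hfj]
      show dt j = _
      rw [hdtj]
      linarith
    · have hTpart : (∑ jj : {j' // FT j'}, (if jj.1 = j then dz (Sum.inr jj) else 0)) = 0 := by
        apply Finset.sum_eq_zero
        intro jj _
        have : jj.1 ≠ j := by
          intro hh
          exact hfj (hh ▸ jj.2)
        simp [this]
      rw [hTpart, add_zero, hEpart] at hb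
      have hdtj : dt j = 0 := by rw [hdt]; simp [dif_neg hfj]
      show dt j = _
      rw [hdtj]
      exact hb.symm
  · -- (e) support of dy
    intro e hne
    by_contra hcon
    apply hne
    rw [hdy]
    have : ¬ FY e := by rw [hFY]; exact hcon
    simp [dif_neg this]
  · -- (f) support of dt
    intro j hne
    by_contra hcon
    apply hne
    rw [hdt]
    have : ¬ FT j := by rw [hFT]; exact hcon
    simp [dif_neg this]

end AuxiliaryLemmas

open Finset in
/-- If the 0-1 matrix `w` satisfies the SSSI constraint and `P(w)` is nonempty, then for every
nonnegative rational cost vector `c`, the LP `min ∑_j c_j t_j` over `P(w)` has an optimal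
solution all of whose coordinates lie in `{0, 1}`. -/
theorem P1LP_integral_optimal_of_SSSI {n m r : ℕ} {V E : Type*} [Fintype V] [Fintype E]
    [DecidableEq V] (ℓ : E → Fin n) (ρ : E → V ⊕ Fin m)
    (hinj : Function.Injective fun e : E => (ℓ e, ρ e))
    (w : Matrix (Fin r) (Fin m) ℝ)
    (h01 : ∀ i j, w i j = 0 ∨ w i j = 1)
    (hSSSI : ∀ j : Fin m, ∀ i i' : Fin r, w i j ≠ 0 → w i' j ≠ 0 → i = i')
    (hne : (Pw ℓ ρ w).Nonempty)
    (c : Fin m → ℚ) (hc : ∀ j, 0 ≤ c j) :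
    ∃ yt ∈ Pw ℓ ρ w,
      (∀ e : E, yt.1 e = 0 ∨ yt.1 e = 1) ∧ (∀ j : Fin m, yt.2 j = 0 ∨ yt.2 j = 1) ∧
      ∀ zt ∈ Pw ℓ ρ w, ∑ j : Fin m, (c j : ℝ) * yt.2 j ≤ ∑ j : Fin m, (c j : ℝ) * zt.2 j := by
  classical
  set f : ((E → ℝ) × (Fin m → ℝ)) → ℝ := fun yt => ∑ j, (c j : ℝ) * yt.2 j with hf
  have hfcont : Continuous f := by
    apply continuous_finset_sum
    intro j _
    exact continuous_const.mul ((continuous_apply j).comp continuous_snd)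
  set φ : ((E → ℝ) × (Fin m → ℝ)) → ℝ :=
    fun yt => (∑ e, (yt.1 e - (yt.1 e) ^ 2)) + ∑ j, (yt.2 j - (yt.2 j) ^ 2) with hφ
  have hφcont : Continuous φ := by
    apply Continuous.add
    · apply continuous_finset_sum
      intro e _
      exact ((continuous_apply e).comp continuous_fst).sub
        (((continuous_apply e).comp continuous_fst).pow 2)
    · apply continuous_finset_sum
      intro j _
      exact ((continuous_apply j).comp continuous_snd).sub
        (((continuous_apply j).comp continuous_snd).pow 2)
  -- Pw is closed
  have hcont1 : ∀ v : Fin n, Continuous fun yt : (E → ℝ) × (Fin m → ℝ) =>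
      ∑ e, (if ℓ e = v then yt.1 e else 0) := by
    intro v
    apply continuous_finset_sum
    intro e _
    by_cases h : ℓ e = v
    · simp only [if_pos h]; exact (continuous_apply e).comp continuous_fst
    · simpa [h] using (continuous_const : Continuous fun _ : (E → ℝ) × (Fin m → ℝ) => (0:ℝ))
  have hcont2 : ∀ u : V ⊕ Fin m, Continuous fun yt : (E → ℝ) × (Fin m → ℝ) =>
      ∑ e, (if ρ e = u then yt.1 e else 0) := by
    intro u
    apply continuous_finset_sum
    intro e _
    by_cases h : ρ e = u
    · simp only [if_pos h]; exact (continuous_apply e).comp continuous_fst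
    · simpa [h] using (continuous_const : Continuous fun _ : (E → ℝ) × (Fin m → ℝ) => (0:ℝ))
  have hcont3 : ∀ i : Fin r, Continuous fun yt : (E → ℝ) × (Fin m → ℝ) =>
      ∑ j, w i j * yt.2 j := by
    intro i
    apply continuous_finset_sum
    intro j _
    exact continuous_const.mul ((continuous_apply j).comp continuous_snd)
  have hclosed : IsClosed (Pw ℓ ρ w) := by
    unfold Pw
    repeat rw [Set.setOf_and]
    refine IsClosed.inter ?_ (IsClosed.inter ?_ (IsClosed.inter ?_
      (IsClosed.inter ?_ (IsClosed.inter ?_ ?_))))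
    · rw [Set.setOf_forall]
      exact isClosed_iInter fun v => isClosed_eq (hcont1 v) continuous_const
    · rw [Set.setOf_forall]
      exact isClosed_iInter fun u => isClosed_le (hcont2 u) continuous_const
    · rw [Set.setOf_forall]
      exact isClosed_iInter fun i => isClosed_le continuous_const (hcont3 i)
    · rw [Set.setOf_forall]
      exact isClosed_iInter fun j =>
        isClosed_le (hcont2 (Sum.inr j)) ((continuous_apply j).comp continuous_snd)
    · rw [Set.setOf_forall]
      refine isClosed_iInter fun e => ?_
      rw [Set.setOf_and]
      exact IsClosed.inter
        (isClosed_le continuous_const ((continuous_apply e).comp continuous_fst))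
        (isClosed_le ((continuous_apply e).comp continuous_fst) continuous_const)
    · rw [Set.setOf_forall]
      refine isClosed_iInter fun j => ?_
      rw [Set.setOf_and]
      exact IsClosed.inter
        (isClosed_le continuous_const ((continuous_apply j).comp continuous_snd))
        (isClosed_le ((continuous_apply j).comp continuous_snd) continuous_const)
  have hsub : Pw ℓ ρ w ⊆ Set.Icc (0 : (E → ℝ) × (Fin m → ℝ)) 1 := by
    intro yt hyt
    obtain ⟨-, -, -, -, hbox, hboxt⟩ := hyt
    simp only [Set.mem_Icc, Prod.le_def, Pi.le_def, Prod.fst_zero, Prod.snd_zero,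
      Prod.fst_one, Prod.snd_one, Pi.zero_apply, Pi.one_apply]
    exact ⟨⟨fun e => (hbox e).1, fun j => (hboxt j).1⟩,
      fun e => (hbox e).2, fun j => (hboxt j).2⟩
  have hcompact : IsCompact (Pw ℓ ρ w) :=
    IsCompact.of_isClosed_subset isCompact_Icc hclosed hsub
  obtain ⟨x₀, hx₀, hx₀min⟩ := hcompact.exists_isMinOn hne hfcont.continuousOn
  set C : Set ((E → ℝ) × (Fin m → ℝ)) := Pw ℓ ρ w ∩ {yt | f yt = f x₀} with hC
  have hCcomp : IsCompact C := hcompact.inter_right (isClosed_eq hfcont continuous_const)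
  have hCne : C.Nonempty := ⟨x₀, hx₀, rfl⟩
  obtain ⟨x, hxC, hxφ⟩ := hCcomp.exists_isMinOn hCne hφcont.continuousOn
  have hxPw : x ∈ Pw ℓ ρ w := hxC.1
  have hxf : f x = f x₀ := hxC.2
  have hint : (∀ e, x.1 e = 0 ∨ x.1 e = 1) ∧ (∀ j, x.2 j = 0 ∨ x.2 j = 1) := by
    by_contra hcon
    obtain ⟨-, -, -, -, hbox, hboxt⟩ := hxPw
    have hfrac : (∃ e, 0 < x.1 e ∧ x.1 e < 1) ∨ (∃ j, 0 < x.2 j ∧ x.2 j < 1) := by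
      rcases not_and_or.mp hcon with h | h
      · left
        push_neg at h
        obtain ⟨e, h0, h1⟩ := h
        exact ⟨e, lt_of_le_of_ne (hbox e).1 (Ne.symm h0), lt_of_le_of_ne (hbox e).2 h1⟩
      · right
        push_neg at h
        obtain ⟨j, h0, h1⟩ := h
        exact ⟨j, lt_of_le_of_ne (hboxt j).1 (Ne.symm h0), lt_of_le_of_ne (hboxt j).2 h1⟩
    obtain ⟨d, hdne, ha, hb, hc3, hd3, he, hf2⟩ :=
      exists_good_direction ℓ ρ w h01 hSSSI x hxC.1 hfrac
    obtain ⟨ε, hεpos, hmemp, hmemm⟩ := perturb_mem ℓ ρ w h01 x hxC.1 d ha hb hc3 hd3 he hf2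
    have hc1p : ∀ e, (x + ε • d).1 e = x.1 e + ε * d.1 e := fun e => by
      simp [Prod.fst_add, Prod.smul_fst, Pi.add_apply, Pi.smul_apply, smul_eq_mul]
    have hc2p : ∀ j, (x + ε • d).2 j = x.2 j + ε * d.2 j := fun j => by
      simp [Prod.snd_add, Prod.smul_snd, Pi.add_apply, Pi.smul_apply, smul_eq_mul]
    have hc1m : ∀ e, (x - ε • d).1 e = x.1 e - ε * d.1 e := fun e => by
      simp [Prod.fst_sub, Prod.smul_fst, Pi.sub_apply, Pi.smul_apply, smul_eq_mul]
    have hc2m : ∀ j, (x - ε • d).2 j = x.2 j - ε * d.2 j := fun j => by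
      simp [Prod.snd_sub, Prod.smul_snd, Pi.sub_apply, Pi.smul_apply, smul_eq_mul]
    -- f is affine in the direction d
    have hfsum : f (x + ε • d) + f (x - ε • d) = 2 * f x := by
      simp only [hf, hc2p, hc2m]
      rw [← Finset.sum_add_distrib, Finset.mul_sum]
      apply Finset.sum_congr rfl
      intro j _
      ring
    have h1 : f x₀ ≤ f (x + ε • d) := isMinOn_iff.mp hx₀min _ hmemp
    have h2 : f x₀ ≤ f (x - ε • d) := isMinOn_iff.mp hx₀min _ hmemm
    have hfp : f (x + ε • d) = f x₀ := by linarith [hxf]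
    have hfm : f (x - ε • d) = f x₀ := by linarith [hxf]
    have hmemCp : x + ε • d ∈ C := ⟨hmemp, hfp⟩
    have hmemCm : x - ε • d ∈ C := ⟨hmemm, hfm⟩
    -- φ is strictly concave along d
    have hEsum : (∑ e, ((x.1 e + ε * d.1 e) - (x.1 e + ε * d.1 e) ^ 2))
        + (∑ e, ((x.1 e - ε * d.1 e) - (x.1 e - ε * d.1 e) ^ 2))
        = 2 * (∑ e, (x.1 e - (x.1 e) ^ 2)) - 2 * ε ^ 2 * ∑ e, (d.1 e) ^ 2 := by
      rw [← Finset.sum_add_distrib, Finset.mul_sum, Finset.mul_sum, ← Finset.sum_sub_distrib]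
      apply Finset.sum_congr rfl
      intro e _
      ring
    have hTsum : (∑ j, ((x.2 j + ε * d.2 j) - (x.2 j + ε * d.2 j) ^ 2))
        + (∑ j, ((x.2 j - ε * d.2 j) - (x.2 j - ε * d.2 j) ^ 2))
        = 2 * (∑ j, (x.2 j - (x.2 j) ^ 2)) - 2 * ε ^ 2 * ∑ j, (d.2 j) ^ 2 := by
      rw [← Finset.sum_add_distrib, Finset.mul_sum, Finset.mul_sum, ← Finset.sum_sub_distrib]
      apply Finset.sum_congr rfl
      intro j _
      ring
    have hφsum : φ (x + ε • d) + φ (x - ε • d)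
        = 2 * φ x - 2 * ε ^ 2 * ((∑ e, (d.1 e) ^ 2) + ∑ j, (d.2 j) ^ 2) := by
      simp only [hφ, hc1p, hc2p, hc1m, hc2m]
      linear_combination hEsum + hTsum
    have hpos : 0 < (∑ e, (d.1 e) ^ 2) + ∑ j, (d.2 j) ^ 2 := by
      have hY : (0:ℝ) ≤ ∑ e, (d.1 e) ^ 2 := Finset.sum_nonneg fun e _ => sq_nonneg _
      have hT : (0:ℝ) ≤ ∑ j, (d.2 j) ^ 2 := Finset.sum_nonneg fun j _ => sq_nonneg _
      rcases hdne with ⟨e0, h⟩ | ⟨j0, h⟩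
      · have h1 : 0 < (d.1 e0) ^ 2 := by positivity
        have h2 : (d.1 e0) ^ 2 ≤ ∑ e, (d.1 e) ^ 2 :=
          Finset.single_le_sum (f := fun e => (d.1 e) ^ 2) (fun e _ => sq_nonneg _) (mem_univ e0)
        linarith
      · have h1 : 0 < (d.2 j0) ^ 2 := by positivity
        have h2 : (d.2 j0) ^ 2 ≤ ∑ j, (d.2 j) ^ 2 :=
          Finset.single_le_sum (f := fun j => (d.2 j) ^ 2) (fun j _ => sq_nonneg _) (mem_univ j0)
        linarith
    have hφ1 : φ x ≤ φ (x + ε • d) := isMinOn_iff.mp hxφ _ hmemCp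
    have hφ2 : φ x ≤ φ (x - ε • d) := isMinOn_iff.mp hxφ _ hmemCm
    have hεsq : 0 < ε ^ 2 := by positivity
    nlinarith
  refine ⟨x, hxC.1, hint.1, hint.2, ?_⟩
  intro zt hzt
  have hle := isMinOn_iff.mp hx₀min zt hzt
  calc ∑ j, (c j : ℝ) * x.2 j = f x := rfl
  _ = f x₀ := hxf
  _ ≤ f zt := hle
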